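/- Let d ∈ ℕ with d ≥ 2, let G be a locally compact group, and suppose f ∈ 𝒫(S^{d+2},G) (so that also f ∈ 𝒫(S^d,G)). Let φ_{n,d} and φ_{n,d+2} denote the d- and (d+2)-Schoenberg functions of f, given by φ_{n,D}(u) := (N_n(D) σ_{D-1} / σ_D) ∫_{-1}^1 f(x,u) c_n(D,x) (1-x²)^{D/2-1} dx for D ∈ {d, d+2}. Then for all n ≥ 0 and all u ∈ G: φ_{n,d+2}(u) = ((n+d-1)(n+d)/(d(2n+d-1))) φ_{n,d}(u) - ((n+1)(n+2)/(d(2n+d+3))) φ_{n+2,d}(u). -/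

import Mathlib

open scoped RealInnerProductSpace BigOperators ComplexOrder
open Polynomial MeasureTheory Filter

/-- Gegenbauer polynomial `C_n^{(λ)}(x)` via its explicit formula. -/
noncomputable def gegenbauerC (lam : ℝ) (n : ℕ) (x : ℝ) : ℝ :=
  ∑ k ∈ Finset.range (n / 2 + 1),
    (-1 : ℝ) ^ k * ((ascPochhammer ℝ (n - k)).eval lam /
      ((Nat.factorial k : ℝ) * (Nat.factorial (n - 2 * k) : ℝ))) * (2 * x) ^ (n - 2 * k)

/-- Chebyshev polynomial of the first kind, evaluated at a real number. -/
noncomputable def chebyshevT (n : ℕ) (x : ℝ) : ℝ := (Polynomial.Chebyshev.T ℝ (n : ℤ)).eval x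

/-- Normalized ultraspherical polynomials `c_n(d,x)`: for `d ≥ 2` the Gegenbauer polynomial
with parameter `λ = (d-1)/2` normalized to be `1` at `x = 1`; for `d = 1` the Chebyshev
polynomial `T_n`. -/
noncomputable def ultraC (d n : ℕ) (x : ℝ) : ℝ :=
  if d = 1 then chebyshevT n x
  else gegenbauerC (((d : ℝ) - 1) / 2) n x / gegenbauerC (((d : ℝ) - 1) / 2) n 1

/-- Dimension `N_n(d)` of the space of spherical harmonics of degree `n` on `S^d`. -/
noncomputable def NNdim (n d : ℕ) : ℝ :=
  if n = 0 then 1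
  else (ascPochhammer ℝ (n - 1)).eval (d : ℝ) * (2 * n + d - 1) / Nat.factorial n

/-- Total surface measure `σ_d = 2 π^((d+1)/2) / Γ((d+1)/2)` of the sphere `S^d`
(for `d = 0` this gives the value `2`). -/
noncomputable def sigmaS (d : ℕ) : ℝ :=
  2 * Real.pi ^ (((d : ℝ) + 1) / 2) / Real.Gamma (((d : ℝ) + 1) / 2)

/-- The class `𝒫(G)` of continuous positive definite functions on a topological group `G`. -/
def IsPosDefOnGroup {G : Type*} [Group G] [TopologicalSpace G] (φ : G → ℂ) : Prop :=
  Continuous φ ∧ ∀ (n : ℕ) (u : Fin n → G) (a : Fin n → ℂ),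
    0 ≤ ∑ k, ∑ l, φ ((u k)⁻¹ * u l) * a k * (starRingEnd ℂ) (a l)

/-- The class `𝒫(S^d, G)`: continuous functions `f` on `[-1,1] × G` such that the kernel
`((ξ,u),(η,v)) ↦ f(ξ·η, u⁻¹v)` is positive definite on `(S^d × G)²`, where `S^d` is the
unit sphere of `ℝ^(d+1)`. -/
def IsPosDefSphereGroup (d : ℕ) {G : Type*} [Group G] [TopologicalSpace G]
    (f : ℝ → G → ℂ) : Prop :=
  ContinuousOn (fun p : ℝ × G => f p.1 p.2) (Set.Icc (-1 : ℝ) 1 ×ˢ Set.univ) ∧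
  ∀ (n : ℕ) (ξ : Fin n → EuclideanSpace ℝ (Fin (d + 1))) (u : Fin n → G),
    (∀ k, ‖ξ k‖ = 1) → ∀ a : Fin n → ℂ,
      0 ≤ ∑ k, ∑ l, f ⟪ξ k, ξ l⟫ ((u k)⁻¹ * u l) * a k * (starRingEnd ℂ) (a l)

/-- The `n`-th `d`-Schoenberg function of `f`:
`φ_{n,d}(u) = (N_n(d) σ_{d-1} / σ_d) ∫_{-1}^1 f(x,u) c_n(d,x) (1-x²)^{d/2-1} dx`. -/
noncomputable def schoenbergFn (d : ℕ) {G : Type*} [Group G] [TopologicalSpace G]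
    (f : ℝ → G → ℂ) (n : ℕ) (u : G) : ℂ :=
  ((NNdim n d * sigmaS (d - 1) / sigmaS d : ℝ) : ℂ) *
    ∫ x in (-1 : ℝ)..1, f x u * ((ultraC d n x : ℝ) : ℂ) *
      (((1 - x ^ 2) ^ ((d : ℝ) / 2 - 1) : ℝ) : ℂ)

private lemma poch_left (n : ℕ) (x : ℝ) :
    (ascPochhammer ℝ (n+1)).eval x = x * (ascPochhammer ℝ n).eval (x+1) := by
  rw [ascPochhammer_succ_left, eval_mul, eval_X, eval_comp, eval_add, eval_X, eval_one]

/-- expansion of `gegenbauerC lam (n+2) x` over the extended range. -/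
private lemma gegen_top (lam : ℝ) (n : ℕ) (x : ℝ) :
    gegenbauerC lam (n+2) x = ∑ k ∈ Finset.range (n/2+2),
      (-1 : ℝ) ^ k * ((ascPochhammer ℝ (n + 2 - k)).eval lam /
        ((Nat.factorial k : ℝ) * (Nat.factorial (n + 2 - 2 * k) : ℝ))) * (2 * x) ^ (n + 2 - 2 * k) := by
  have h : (n+2)/2 + 1 = n/2 + 2 := by omega
  rw [gegenbauerC, h]

/-- `gegenbauerC lam n x` reshaped as a sum over `range (n/2+2)` with shifted indices. -/
private lemma gegen_shift (lam : ℝ) (n : ℕ) (x : ℝ) :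
    gegenbauerC lam n x = ∑ k ∈ Finset.range (n/2+2),
      -((-1 : ℝ) ^ k * ((k : ℝ) * (ascPochhammer ℝ (n + 1 - k)).eval lam /
        ((Nat.factorial k : ℝ) * (Nat.factorial (n + 2 - 2 * k) : ℝ))) * (2 * x) ^ (n + 2 - 2 * k)) := by
  rw [Finset.sum_range_succ' _ (n/2+1)]
  simp only [Nat.cast_zero, Nat.factorial_zero, zero_mul, mul_zero, zero_div, pow_zero,
    neg_zero, add_zero]
  rw [gegenbauerC]
  refine Finset.sum_congr rfl fun k hk => ?_
  have hk' : 2 * k ≤ n := by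
    have := Finset.mem_range.mp hk; omega
  have e1 : n + 2 - 2 * (k + 1) = n - 2 * k := by omega
  have e2 : n + 1 - (k + 1) = n - k := by omega
  rw [e1, e2, Nat.factorial_succ, pow_succ]
  have h1 : ((k.factorial : ℝ)) ≠ 0 := Nat.cast_ne_zero.mpr k.factorial_ne_zero
  have h2 : (((n - 2*k).factorial : ℝ)) ≠ 0 := Nat.cast_ne_zero.mpr (n - 2*k).factorial_ne_zero
  have h3 : ((k:ℝ) + 1) ≠ 0 := by positivity
  push_cast
  field_simp

/-- `x^2 * gegenbauerC lam n x` reshaped as a sum over `range (n/2+2)`. -/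
private lemma gegen_sq (lam : ℝ) (n : ℕ) (x : ℝ) :
    x^2 * gegenbauerC lam n x = ∑ k ∈ Finset.range (n/2+2),
      (-1:ℝ)^k * (((((n+2-2*k) * (n+1-2*k) : ℕ)) : ℝ) * (ascPochhammer ℝ (n - k)).eval lam /
        (4 * (Nat.factorial k : ℝ) * (Nat.factorial (n+2-2*k) : ℝ))) * (2*x)^(n+2-2*k) := by
  rw [Finset.sum_range_succ]
  have hz : ((n+2-2*(n/2+1)) * (n+1-2*(n/2+1)) : ℕ) = 0 := Nat.mul_eq_zero.mpr (by omega)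
  rw [hz]
  simp only [Nat.cast_zero, zero_mul, zero_div, mul_zero, zero_mul, add_zero]
  rw [gegenbauerC, Finset.mul_sum]
  refine Finset.sum_congr rfl fun k hk => ?_
  have hk' : 2 * k ≤ n := by
    have := Finset.mem_range.mp hk; omega
  obtain ⟨m, hm⟩ : ∃ m, n - 2*k = m := ⟨_, rfl⟩
  have e1 : n + 2 - 2 * k = m + 2 := by omega
  have e2 : (n + 2 - 2*k) * (n + 1 - 2*k) = (m+2) * (m+1) := by
    rw [e1]; congr 1; omega
  have e4 : n - k = m + k := by omega
  rw [e2, e1, e4, hm, Nat.factorial_succ, Nat.factorial_succ, pow_add]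
  have h1 : ((k.factorial : ℝ)) ≠ 0 := Nat.cast_ne_zero.mpr k.factorial_ne_zero
  have h2 : ((m.factorial : ℝ)) ≠ 0 := Nat.cast_ne_zero.mpr m.factorial_ne_zero
  have h3 : ((m:ℝ) + 2) ≠ 0 := by positivity
  have h4 : ((m:ℝ) + 1) ≠ 0 := by positivity
  push_cast
  field_simp
  ring

/-- The key contiguity identity:
`4λ(λ+n+1)(1-x²) C_n^{(λ+1)}(x) = (2λ+n)(2λ+n+1) C_n^{(λ)}(x) - (n+1)(n+2) C_{n+2}^{(λ)}(x)`. -/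
lemma gegen_rec (lam : ℝ) (n : ℕ) (x : ℝ) :
    4*lam*(lam + (n:ℝ) + 1) * ((1 - x^2) * gegenbauerC (lam+1) n x)
      = (2*lam + n)*(2*lam + (n:ℝ) + 1) * gegenbauerC lam n x
        - ((n:ℝ)+1)*((n:ℝ)+2) * gegenbauerC lam (n+2) x := by
  have split : (1 - x^2) * gegenbauerC (lam+1) n x
      = gegenbauerC (lam+1) n x - x^2 * gegenbauerC (lam+1) n x := by ring
  rw [split, gegen_sq (lam+1) n x, gegen_shift (lam+1) n x, gegen_shift lam n x,
    gegen_top lam n x, ← Finset.sum_sub_distrib, Finset.mul_sum, Finset.mul_sum,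
    Finset.mul_sum, ← Finset.sum_sub_distrib]
  refine Finset.sum_congr rfl fun k hk => ?_
  have hk1 : k ≤ n/2 + 1 := by have := Finset.mem_range.mp hk; omega
  have hk2 : 2*k ≤ n + 2 := by omega
  rcases Nat.eq_zero_or_pos k with hk0 | hkpos
  · -- k = 0
    subst hk0
    simp only [Nat.sub_zero, Nat.mul_zero, Nat.cast_zero, pow_zero]
    have p1 : (ascPochhammer ℝ (n+2)).eval lam = lam * (ascPochhammer ℝ (n+1)).eval (lam+1) :=
      poch_left (n+1) lam
    have p2 : (ascPochhammer ℝ (n+1)).eval (lam+1)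
        = (ascPochhammer ℝ n).eval (lam+1) * ((lam+1) + n) := ascPochhammer_succ_eval n (lam+1)
    rw [p1, p2]
    push_cast
    ring
  · rcases Nat.lt_or_ge n k with hnk | hkn
    · -- k ≥ 1 and k > n: forces n = 0, k = 1
      have hn0 : n = 0 := by omega
      have hk1' : k = 1 := by omega
      subst hn0; subst hk1'
      norm_num [ascPochhammer_one, ascPochhammer_succ_eval]
      ring
    · -- main case: 1 ≤ k ≤ n
      obtain ⟨i, hi⟩ : ∃ i, n - k = i := ⟨_, rfl⟩
      have e1 : n + 1 - k = i + 1 := by omega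
      have e2 : n + 2 - k = i + 2 := by omega
      have hc : ((((n+2-2*k) * (n+1-2*k) : ℕ)) : ℝ)
          = ((n:ℝ) + 2 - 2*(k:ℝ)) * ((n:ℝ) + 1 - 2*(k:ℝ)) := by
        rcases Nat.lt_or_ge (2*k) (n+2) with h | h
        · have h1 : 2*k ≤ n + 1 := by omega
          push_cast [Nat.cast_sub hk2, Nat.cast_sub h1]
          ring
        · have h0 : n + 2 - 2*k = 0 := by omega
          have h0' : 2*(k:ℝ) = (n:ℝ) + 2 := by
            have : 2*k = n + 2 := by omega
            exact_mod_cast congrArg (Nat.cast : ℕ → ℝ) this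
          rw [h0]
          simp [h0']
      rw [e1, e2, hi]
      have p1 : (ascPochhammer ℝ (i+1)).eval (lam+1)
          = (ascPochhammer ℝ i).eval (lam+1) * ((lam+1) + i) := ascPochhammer_succ_eval i (lam+1)
      have p2 : (ascPochhammer ℝ (i+1)).eval lam = lam * (ascPochhammer ℝ i).eval (lam+1) :=
        poch_left i lam
      have p3 : (ascPochhammer ℝ (i+2)).eval lam = lam * (ascPochhammer ℝ (i+1)).eval (lam+1) :=
        poch_left (i+1) lam
      have hn : (n:ℝ) = (k:ℝ) + (i:ℝ) := by
        have : n = k + i := by omega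
        exact_mod_cast congrArg (Nat.cast : ℕ → ℝ) this
      rw [p1] at p3
      rw [hc, p1, p2, p3, hn]
      ring

/-- Value at `x = 1`: `C_n^{(λ)}(1) = (2λ)_n / n!`. -/
lemma gegen_one (lam : ℝ) (n : ℕ) :
    gegenbauerC lam n 1 = (ascPochhammer ℝ n).eval (2*lam) / (n.factorial : ℝ) := by
  induction n using Nat.strong_induction_on with
  | _ n ih =>
    match n with
    | 0 => simp [gegenbauerC, ascPochhammer_zero]
    | 1 => simp [gegenbauerC, ascPochhammer_one]; ring
    | (m+2) =>
      have h0 := gegen_rec lam m 1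
      have ihm := ih m (by omega)
      rw [ihm] at h0
      norm_num at h0
      have hfac : (((m+2).factorial : ℕ) : ℝ) = ((m:ℝ)+2)*((m:ℝ)+1)*(m.factorial:ℝ) := by
        rw [Nat.factorial_succ, Nat.factorial_succ]; push_cast; ring
      have hpoch : (ascPochhammer ℝ (m+2)).eval (2*lam)
          = (ascPochhammer ℝ m).eval (2*lam) * (2*lam+(m:ℝ)) * (2*lam+(m:ℝ)+1) := by
        rw [ascPochhammer_succ_eval, ascPochhammer_succ_eval]; push_cast; ring
      have hmf : ((m.factorial : ℕ) : ℝ) ≠ 0 := Nat.cast_ne_zero.mpr m.factorial_ne_zero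
      have h1 : ((m:ℝ)+1)*((m:ℝ)+2) ≠ 0 := by positivity
      rw [eq_div_iff (by rw [hfac]; positivity), hfac, hpoch]
      field_simp at h0
      nlinarith [h0]

lemma gegen_one_pos {lam : ℝ} (h : 0 < lam) (n : ℕ) : 0 < gegenbauerC lam n 1 := by
  rw [gegen_one]
  have h1 : 0 < (ascPochhammer ℝ n).eval (2*lam) := ascPochhammer_pos n (2*lam) (by linarith)
  have h2 : (0:ℝ) < (n.factorial : ℝ) := by exact_mod_cast n.factorial_pos
  positivity

set_option maxHeartbeats 1000000 in
lemma key_poly (d n : ℕ) (hd : 2 ≤ d) (x : ℝ) :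
    NNdim n (d+2) * (((d:ℝ)+1) / (d:ℝ)) * (ultraC (d+2) n x * (1 - x^2))
      = ((((n:ℝ) + (d:ℝ) - 1) * ((n:ℝ) + (d:ℝ))) / ((d:ℝ) * (2*(n:ℝ) + (d:ℝ) - 1)))
          * (NNdim n d * ultraC d n x)
        - ((((n:ℝ) + 1) * ((n:ℝ) + 2)) / ((d:ℝ) * (2*(n:ℝ) + (d:ℝ) + 3)))
          * (NNdim (n+2) d * ultraC d (n+2) x) := by
  have hd2 : (2:ℝ) ≤ (d:ℝ) := by exact_mod_cast hd
  have hn0 : (0:ℝ) ≤ (n:ℝ) := Nat.cast_nonneg n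
  simp only [ultraC, if_neg (show d ≠ 1 by omega), if_neg (show d + 2 ≠ 1 by omega)]
  have ecast : ((↑(d+2):ℝ) - 1) / 2 = ((d:ℝ)-1)/2 + 1 := by push_cast; ring
  rw [ecast]
  set lam : ℝ := ((d:ℝ)-1)/2 with hlamdef
  have hlam : 0 < lam := by rw [hlamdef]; linarith
  have h2lam : 2 * lam = (d:ℝ) - 1 := by rw [hlamdef]; ring
  have h2lam1 : 2 * (lam + 1) = (d:ℝ) + 1 := by rw [hlamdef]; ring
  -- values at 1
  have hg0 : gegenbauerC (lam+1) n 1 = (ascPochhammer ℝ n).eval ((d:ℝ)+1) / (n.factorial : ℝ) := by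
    rw [gegen_one, h2lam1]
  have hg1 : gegenbauerC lam n 1 = (ascPochhammer ℝ n).eval ((d:ℝ)-1) / (n.factorial : ℝ) := by
    rw [gegen_one, h2lam]
  have hg2 : gegenbauerC lam (n+2) 1
      = (ascPochhammer ℝ (n+2)).eval ((d:ℝ)-1) / ((n+2).factorial : ℝ) := by
    rw [gegen_one, h2lam]
  -- the recurrence
  have hZ : (4*lam*(lam + (n:ℝ) + 1)) ≠ 0 := by positivity
  have hZeq : 4*lam*(lam + (n:ℝ) + 1) = ((d:ℝ)-1)*((d:ℝ)+2*(n:ℝ)+1) := by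
    rw [hlamdef]; ring
  have hshape : gegenbauerC (lam+1) n x / gegenbauerC (lam+1) n 1 * (1 - x^2)
      = ((1 - x^2) * gegenbauerC (lam+1) n x) / gegenbauerC (lam+1) n 1 := by ring
  have hrec : (1 - x^2) * gegenbauerC (lam+1) n x
      = ((2*lam + n)*(2*lam + (n:ℝ) + 1) * gegenbauerC lam n x
        - ((n:ℝ)+1)*((n:ℝ)+2) * gegenbauerC lam (n+2) x) / (4*lam*(lam + (n:ℝ) + 1)) := by
    rw [eq_div_iff hZ]
    linear_combination gegen_rec lam n x
  -- nonvanishing of normalizations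
  have hp0 : gegenbauerC (lam+1) n 1 ≠ 0 := ne_of_gt (gegen_one_pos (by linarith) n)
  have hp1 : gegenbauerC lam n 1 ≠ 0 := ne_of_gt (gegen_one_pos hlam n)
  have hp2 : gegenbauerC lam (n+2) 1 ≠ 0 := ne_of_gt (gegen_one_pos hlam (n+2))
  -- pochhammer expansions
  have q2 : (ascPochhammer ℝ (n+2)).eval ((d:ℝ)-1)
      = (ascPochhammer ℝ n).eval ((d:ℝ)-1) * ((d:ℝ)-1+n) * ((d:ℝ)+n) := by
    rw [ascPochhammer_succ_eval, ascPochhammer_succ_eval]; push_cast; ring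
  have hfac2 : (((n+2).factorial : ℕ) : ℝ) = ((n:ℝ)+2)*((n:ℝ)+1)*(n.factorial : ℝ) := by
    rw [Nat.factorial_succ, Nat.factorial_succ]; push_cast; ring
  have hnf : ((n.factorial : ℕ) : ℝ) ≠ 0 := Nat.cast_ne_zero.mpr n.factorial_ne_zero
  have hdd : (d:ℝ) ≠ 0 := by linarith
  have hdm1 : (d:ℝ) - 1 ≠ 0 := by linarith
  have hdp1 : (d:ℝ) + 1 ≠ 0 := by linarith
  have hz1 : (d:ℝ) + 2*(n:ℝ) + 1 ≠ 0 := by linarith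
  have hc1 : 2*(n:ℝ) + (d:ℝ) - 1 ≠ 0 := by linarith
  have hc2 : 2*(n:ℝ) + (d:ℝ) + 3 ≠ 0 := by linarith
  rw [hshape, hrec, div_div]
  have main1 : NNdim n (d+2) * (((d:ℝ)+1)/(d:ℝ))
        * ((2*lam + n)*(2*lam + (n:ℝ) + 1) / (4*lam*(lam + (n:ℝ) + 1) * gegenbauerC (lam+1) n 1))
      = ((((n:ℝ) + (d:ℝ) - 1) * ((n:ℝ) + (d:ℝ))) / ((d:ℝ) * (2*(n:ℝ) + (d:ℝ) - 1)))
          * (NNdim n d / gegenbauerC lam n 1) := by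
    rw [hg0, hg1, hZeq, h2lam]
    rcases n with _ | m
    · simp only [NNdim, if_pos rfl]
      simp only [ascPochhammer_zero, Polynomial.eval_one, Nat.factorial_zero, Nat.cast_zero,
        Nat.cast_one]
      norm_num
      field_simp
    · simp only [NNdim, if_neg (show m+1 ≠ 0 by omega), Nat.add_sub_cancel]
      have hP1 : (ascPochhammer ℝ (m+1)).eval ((d:ℝ)+1)
          = ((d:ℝ)+1) * (ascPochhammer ℝ m).eval ((d:ℝ)+1+1) := poch_left m ((d:ℝ)+1)
      have hP0 : (ascPochhammer ℝ (m+1)).eval ((d:ℝ)-1)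
          = ((d:ℝ)-1) * (ascPochhammer ℝ m).eval ((d:ℝ)) := by
        have h := poch_left m ((d:ℝ)-1)
        have e : (d:ℝ) - 1 + 1 = (d:ℝ) := by ring
        rwa [e] at h
      have ed2 : ((↑(d+2):ℝ)) = (d:ℝ)+1+1 := by push_cast; ring
      rw [hP1, hP0, ed2]
      have hQ0 : (ascPochhammer ℝ m).eval ((d:ℝ)+1+1) ≠ 0 :=
        ne_of_gt (ascPochhammer_pos m _ (by linarith))
      have hR0 : (ascPochhammer ℝ m).eval ((d:ℝ)) ≠ 0 :=
        ne_of_gt (ascPochhammer_pos m _ (by linarith))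
      have hmf : (((m+1).factorial : ℕ) : ℝ) ≠ 0 := Nat.cast_ne_zero.mpr (m+1).factorial_ne_zero
      push_cast at hz1 hc1 ⊢
      field_simp
      ring
  have main2 : NNdim n (d+2) * (((d:ℝ)+1)/(d:ℝ))
        * (((n:ℝ)+1)*((n:ℝ)+2) / (4*lam*(lam + (n:ℝ) + 1) * gegenbauerC (lam+1) n 1))
      = ((((n:ℝ) + 1) * ((n:ℝ) + 2)) / ((d:ℝ) * (2*(n:ℝ) + (d:ℝ) + 3)))
          * (NNdim (n+2) d / gegenbauerC lam (n+2) 1) := by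
    rw [hg0, hg2, q2, hfac2, hZeq]
    rcases n with _ | m
    · simp only [NNdim, if_pos rfl, if_neg (show (0:ℕ)+2 ≠ 0 by omega)]
      norm_num [ascPochhammer_one]
      field_simp
      ring
    · simp only [NNdim, if_neg (show m+1 ≠ 0 by omega), if_neg (show m+1+2 ≠ 0 by omega),
        Nat.add_sub_cancel]
      have hidx2 : m + 1 + 2 - 1 = m + 2 := by omega
      rw [hidx2, hfac2]
      have hP1 : (ascPochhammer ℝ (m+1)).eval ((d:ℝ)+1)
          = ((d:ℝ)+1) * (ascPochhammer ℝ m).eval ((d:ℝ)+1+1) := poch_left m ((d:ℝ)+1)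
      have hP0 : (ascPochhammer ℝ (m+1)).eval ((d:ℝ)-1)
          = ((d:ℝ)-1) * (ascPochhammer ℝ m).eval ((d:ℝ)) := by
        have h := poch_left m ((d:ℝ)-1)
        have e : (d:ℝ) - 1 + 1 = (d:ℝ) := by ring
        rwa [e] at h
      have hP2 : (ascPochhammer ℝ (m+2)).eval ((d:ℝ))
          = (ascPochhammer ℝ m).eval ((d:ℝ)) * ((d:ℝ)+m) * ((d:ℝ)+m+1) := by
        rw [ascPochhammer_succ_eval, ascPochhammer_succ_eval]; push_cast; ring
      have ed2 : ((↑(d+2):ℝ)) = (d:ℝ)+1+1 := by push_cast; ring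
      rw [hP1, hP0, hP2, ed2]
      have hQ0 : (ascPochhammer ℝ m).eval ((d:ℝ)+1+1) ≠ 0 :=
        ne_of_gt (ascPochhammer_pos m _ (by linarith))
      have hR0 : (ascPochhammer ℝ m).eval ((d:ℝ)) ≠ 0 :=
        ne_of_gt (ascPochhammer_pos m _ (by linarith))
      have hmf : (((m+1).factorial : ℕ) : ℝ) ≠ 0 := Nat.cast_ne_zero.mpr (m+1).factorial_ne_zero
      push_cast at hz1 hc2 ⊢
      have hmd : (m:ℝ) + (d:ℝ) ≠ 0 := ne_of_gt (by linarith [(Nat.cast_nonneg m : (0:ℝ) ≤ m)])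
      have hdm : (d:ℝ) + (m:ℝ) ≠ 0 := ne_of_gt (by linarith [(Nat.cast_nonneg m : (0:ℝ) ≤ m)])
      field_simp
      ring_nf
      field_simp
      ring
  generalize hZg : (4:ℝ)*lam*(lam + (n:ℝ) + 1) = Z at main1 main2 ⊢ 
  generalize hg0g : gegenbauerC (lam+1) n 1 = g0 at main1 main2 ⊢ 
  generalize hg1g : gegenbauerC lam n 1 = g1 at main1 ⊢ 
  generalize hg2g : gegenbauerC lam (n+2) 1 = g2 at main2 ⊢ 
  generalize hGn : gegenbauerC lam n x = Gn
  generalize hGn2 : gegenbauerC lam (n+2) x = Gn2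
  generalize hGl : gegenbauerC (lam+1) n x = Gl
  linear_combination Gn * main1 - Gn2 * main2

lemma sigma_ratio (d : ℕ) (hd : 2 ≤ d) :
    sigmaS (d+1) / sigmaS (d+2) = (((d:ℝ)+1)/(d:ℝ)) * (sigmaS (d-1) / sigmaS d) := by
  have hd2 : (2:ℝ) ≤ (d:ℝ) := by exact_mod_cast hd
  have hc : ((d-1:ℕ):ℝ) = (d:ℝ) - 1 := by
    have h1 : 1 ≤ d := by omega
    push_cast [Nat.cast_sub h1]
    ring
  unfold sigmaS
  rw [hc]
  push_cast
  have e0 : ((d:ℝ) - 1 + 1)/2 = (d:ℝ)/2 := by ring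
  rw [e0]
  have hpi := Real.pi_pos
  have hhalf : (0:ℝ) < (d:ℝ)/2 := by linarith
  have hhalf1 : (0:ℝ) < ((d:ℝ)+1)/2 := by linarith
  -- Gamma recurrences
  have g1 : Real.Gamma (((d:ℝ)+1+1)/2) = ((d:ℝ)/2) * Real.Gamma ((d:ℝ)/2) := by
    rw [show ((d:ℝ)+1+1)/2 = (d:ℝ)/2 + 1 by ring, Real.Gamma_add_one (ne_of_gt hhalf)]
  have g2 : Real.Gamma (((d:ℝ)+2+1)/2) = (((d:ℝ)+1)/2) * Real.Gamma (((d:ℝ)+1)/2) := by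
    rw [show ((d:ℝ)+2+1)/2 = ((d:ℝ)+1)/2 + 1 by ring, Real.Gamma_add_one (ne_of_gt hhalf1)]
  -- pi power splittings
  have p1 : Real.pi ^ (((d:ℝ)+1)/2) = Real.pi ^ ((d:ℝ)/2) * Real.pi ^ ((1:ℝ)/2) := by
    rw [← Real.rpow_add hpi]; congr 1; ring
  have p2 : Real.pi ^ (((d:ℝ)+1+1)/2)
      = Real.pi ^ ((d:ℝ)/2) * Real.pi ^ ((1:ℝ)/2) * Real.pi ^ ((1:ℝ)/2) := by
    rw [← Real.rpow_add hpi, ← Real.rpow_add hpi]; congr 1; ring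
  have p3 : Real.pi ^ (((d:ℝ)+2+1)/2)
      = Real.pi ^ ((d:ℝ)/2) * Real.pi ^ ((1:ℝ)/2) * Real.pi ^ ((1:ℝ)/2) * Real.pi ^ ((1:ℝ)/2) := by
    rw [← Real.rpow_add hpi, ← Real.rpow_add hpi, ← Real.rpow_add hpi]; congr 1; ring
  rw [g1, g2, p1, p2, p3]
  have hG1 : Real.Gamma ((d:ℝ)/2) ≠ 0 := ne_of_gt (Real.Gamma_pos_of_pos hhalf)
  have hG2 : Real.Gamma (((d:ℝ)+1)/2) ≠ 0 := ne_of_gt (Real.Gamma_pos_of_pos hhalf1)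
  have hu : Real.pi ^ ((d:ℝ)/2) ≠ 0 := ne_of_gt (Real.rpow_pos_of_pos hpi _)
  have hv : Real.pi ^ ((1:ℝ)/2) ≠ 0 := ne_of_gt (Real.rpow_pos_of_pos hpi _)
  have hdd : (d:ℝ) ≠ 0 := by linarith
  have hdp1 : (d:ℝ) + 1 ≠ 0 := by linarith
  field_simp

lemma gegen_continuous (lam : ℝ) (n : ℕ) : Continuous fun x => gegenbauerC lam n x := by
  unfold gegenbauerC
  apply continuous_finset_sum
  intro k _
  exact (continuous_const.mul ((continuous_const.mul continuous_id).pow _))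

lemma ultra_continuous (d n : ℕ) : Continuous fun x => ultraC d n x := by
  unfold ultraC
  split_ifs
  · unfold chebyshevT
    exact Polynomial.continuous _
  · exact (gegen_continuous _ _).div_const _

lemma integrable_aux {G : Type*} [Group G] [TopologicalSpace G] {f : ℝ → G → ℂ}
    (hf : ContinuousOn (fun p : ℝ × G => f p.1 p.2) (Set.Icc (-1 : ℝ) 1 ×ˢ Set.univ))
    (u : G) (D k : ℕ) (hD : 2 ≤ D) :
    IntervalIntegrable (fun x => f x u * ((ultraC D k x : ℝ) : ℂ) *
      (((1 - x ^ 2) ^ ((D : ℝ) / 2 - 1) : ℝ) : ℂ)) volume (-1) 1 := by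
  apply ContinuousOn.intervalIntegrable
  rw [Set.uIcc_of_le (by norm_num : (-1:ℝ) ≤ 1)]
  apply ContinuousOn.mul
  apply ContinuousOn.mul
  · exact hf.comp ((continuous_id.prodMk continuous_const).continuousOn)
      (fun x hx => ⟨hx, trivial⟩)
  · exact (Complex.continuous_ofReal.comp (ultra_continuous D k)).continuousOn
  · apply Continuous.continuousOn
    apply Complex.continuous_ofReal.comp
    rw [continuous_iff_continuousAt]
    intro x
    apply ContinuousAt.rpow_const
    · exact (continuous_const.sub (continuous_pow 2)).continuousAt
    · right
      have : (2:ℝ) ≤ (D:ℝ) := by exact_mod_cast hD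
      linarith

/-- Proposition 3.6 (b) of Berg–Porcu: for `d ≥ 2` and `f ∈ 𝒫(S^{d+2}, G)`, the `d`- and
`(d+2)`-Schoenberg functions of `f` satisfy
`φ_{n,d+2} = ((n+d-1)(n+d)/(d(2n+d-1))) φ_{n,d} - ((n+1)(n+2)/(d(2n+d+3))) φ_{n+2,d}`. -/
theorem schoenbergFn_recurrence (d : ℕ) (hd : 2 ≤ d) {G : Type*} [Group G]
    [TopologicalSpace G] [IsTopologicalGroup G] [LocallyCompactSpace G]
    (f : ℝ → G → ℂ) (hf : IsPosDefSphereGroup (d + 2) f) :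
    ∀ (n : ℕ) (u : G),
      schoenbergFn (d + 2) f n u =
        (((((n : ℝ) + d - 1) * ((n : ℝ) + d)) / ((d : ℝ) * (2 * n + d - 1)) : ℝ) : ℂ) *
          schoenbergFn d f n u -
        (((((n : ℝ) + 1) * ((n : ℝ) + 2)) / ((d : ℝ) * (2 * n + d + 3)) : ℝ) : ℂ) *
          schoenbergFn d f (n + 2) u := by
  intro n u
  have hd2r : (2:ℝ) ≤ (d:ℝ) := by exact_mod_cast hd
  have hI2 : IntervalIntegrable (fun x => f x u * ((ultraC d n x : ℝ) : ℂ) *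
      (((1 - x ^ 2) ^ ((d : ℝ) / 2 - 1) : ℝ) : ℂ)) volume (-1) 1 :=
    integrable_aux hf.1 u d n hd
  have hI3 : IntervalIntegrable (fun x => f x u * ((ultraC d (n+2) x : ℝ) : ℂ) *
      (((1 - x ^ 2) ^ ((d : ℝ) / 2 - 1) : ℝ) : ℂ)) volume (-1) 1 :=
    integrable_aux hf.1 u d (n+2) hd
  simp only [schoenbergFn]
  rw [show d + 2 - 1 = d + 1 by omega]
  calc ((NNdim n (d+2) * sigmaS (d+1) / sigmaS (d+2) : ℝ) : ℂ) *
        ∫ x in (-1:ℝ)..1, f x u * ((ultraC (d+2) n x : ℝ) : ℂ) *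
          (((1 - x ^ 2) ^ ((↑(d+2) : ℝ) / 2 - 1) : ℝ) : ℂ)
      = ∫ x in (-1:ℝ)..1, ((NNdim n (d+2) * sigmaS (d+1) / sigmaS (d+2) : ℝ) : ℂ) *
          (f x u * ((ultraC (d+2) n x : ℝ) : ℂ) *
            (((1 - x ^ 2) ^ ((↑(d+2) : ℝ) / 2 - 1) : ℝ) : ℂ)) :=
        (intervalIntegral.integral_const_mul _ _).symm
    _ = ∫ x in (-1:ℝ)..1,
          ((((((n : ℝ) + d - 1) * ((n : ℝ) + d)) / ((d : ℝ) * (2 * n + d - 1))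
              * (NNdim n d * sigmaS (d - 1) / sigmaS d) : ℝ)) : ℂ) *
            (f x u * ((ultraC d n x : ℝ) : ℂ) * (((1 - x ^ 2) ^ ((d : ℝ) / 2 - 1) : ℝ) : ℂ))
          - ((((((n : ℝ) + 1) * ((n : ℝ) + 2)) / ((d : ℝ) * (2 * n + d + 3))
              * (NNdim (n+2) d * sigmaS (d - 1) / sigmaS d) : ℝ)) : ℂ) *
            (f x u * ((ultraC d (n+2) x : ℝ) : ℂ) * (((1 - x ^ 2) ^ ((d : ℝ) / 2 - 1) : ℝ) : ℂ)) := by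
        apply intervalIntegral.integral_congr_ae
        have hne : ∀ᵐ (x:ℝ), x ∉ ({1, -1} : Set ℝ) :=
          measure_eq_zero_iff_ae_notMem.mp ((Set.toFinite ({1, -1} : Set ℝ)).measure_zero _)
        filter_upwards [hne] with x hx hmem
        rw [Set.uIoc_of_le (by norm_num : (-1:ℝ) ≤ 1)] at hmem
        have hx1 : x ≠ 1 := fun h => hx (by simp [h])
        have hxm1 : x ≠ -1 := fun h => hx (by simp [h])
        have hxx : 0 < 1 - x^2 := by
          obtain ⟨h1, h2⟩ := hmem
          have h3 : x < 1 := lt_of_le_of_ne h2 hx1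
          nlinarith
        have wsplit : (1 - x^2) ^ ((↑(d+2):ℝ)/2 - 1)
            = (1 - x^2) ^ ((d:ℝ)/2 - 1) * (1 - x^2) := by
          rw [show ((↑(d+2):ℝ))/2 - 1 = ((d:ℝ)/2 - 1) + 1 by push_cast; ring,
            Real.rpow_add hxx, Real.rpow_one]
        have hkey := key_poly d n hd x
        have hsig := sigma_ratio d hd
        have rid : (NNdim n (d+2) * sigmaS (d+1) / sigmaS (d+2))
              * (ultraC (d+2) n x * ((1 - x^2) ^ ((d:ℝ)/2 - 1) * (1 - x^2)))
            = ((((n : ℝ) + d - 1) * ((n : ℝ) + d)) / ((d : ℝ) * (2 * n + d - 1))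
                * (NNdim n d * sigmaS (d - 1) / sigmaS d))
              * (ultraC d n x * (1 - x^2) ^ ((d:ℝ)/2 - 1))
            - ((((n : ℝ) + 1) * ((n : ℝ) + 2)) / ((d : ℝ) * (2 * n + d + 3))
                * (NNdim (n+2) d * sigmaS (d - 1) / sigmaS d))
              * (ultraC d (n+2) x * (1 - x^2) ^ ((d:ℝ)/2 - 1)) := by
          linear_combination (sigmaS (d-1) / sigmaS d * (1-x^2)^((d:ℝ)/2-1)) * hkey
            + (NNdim n (d+2) * ultraC (d+2) n x * (1-x^2)^((d:ℝ)/2-1) * (1-x^2)) * hsig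
        rw [wsplit]
        have rid' := congrArg (fun t : ℝ => (t : ℂ)) rid
        push_cast at rid' ⊢
        linear_combination (f x u) * rid'
    _ = (∫ x in (-1:ℝ)..1,
          ((((((n : ℝ) + d - 1) * ((n : ℝ) + d)) / ((d : ℝ) * (2 * n + d - 1))
              * (NNdim n d * sigmaS (d - 1) / sigmaS d) : ℝ)) : ℂ) *
            (f x u * ((ultraC d n x : ℝ) : ℂ) * (((1 - x ^ 2) ^ ((d : ℝ) / 2 - 1) : ℝ) : ℂ)))
        - ∫ x in (-1:ℝ)..1,
          ((((((n : ℝ) + 1) * ((n : ℝ) + 2)) / ((d : ℝ) * (2 * n + d + 3))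
              * (NNdim (n+2) d * sigmaS (d - 1) / sigmaS d) : ℝ)) : ℂ) *
            (f x u * ((ultraC d (n+2) x : ℝ) : ℂ) * (((1 - x ^ 2) ^ ((d : ℝ) / 2 - 1) : ℝ) : ℂ)) :=
        intervalIntegral.integral_sub (hI2.const_mul _) (hI3.const_mul _)
    _ = (((((n : ℝ) + d - 1) * ((n : ℝ) + d)) / ((d : ℝ) * (2 * n + d - 1)) : ℝ) : ℂ) *
          (((NNdim n d * sigmaS (d - 1) / sigmaS d : ℝ) : ℂ) *
            ∫ x in (-1:ℝ)..1, f x u * ((ultraC d n x : ℝ) : ℂ) *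
              (((1 - x ^ 2) ^ ((d : ℝ) / 2 - 1) : ℝ) : ℂ))
        - (((((n : ℝ) + 1) * ((n : ℝ) + 2)) / ((d : ℝ) * (2 * n + d + 3)) : ℝ) : ℂ) *
          (((NNdim (n+2) d * sigmaS (d - 1) / sigmaS d : ℝ) : ℂ) *
            ∫ x in (-1:ℝ)..1, f x u * ((ultraC d (n+2) x : ℝ) : ℂ) *
              (((1 - x ^ 2) ^ ((d : ℝ) / 2 - 1) : ℝ) : ℂ)) := by
        rw [intervalIntegral.integral_const_mul, intervalIntegral.integral_const_mul]
        push_cast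
        ring
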